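/- Let n ≥ 1 and let p = (p_n, p_n', q_n, …, p_1, p_1', q_1) ∈ I_n and t = (t_n, t_n', u_n, …, t_1, t_1', u_1) ∈ I_n satisfy p_i + p_i' = t_i + t_i' and q_i = u_i for all i ∈ {1,…,n}. Then s_p = s_t if and only if p = t, and s_p + s_t = 1 if and only if t = f(p). -/

import Mathlib

open Matrix

noncomputable section

/-- `M1 = [[1,1,0],[0,1,0],[0,0,1]]`. -/
def M1 : Matrix (Fin 3) (Fin 3) ℝ := !![1, 1, 0; 0, 1, 0; 0, 0, 1]

/-- `M2 = [[1,0,0],[1,1,1],[0,0,1]]`. -/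
def M2 : Matrix (Fin 3) (Fin 3) ℝ := !![1, 0, 0; 1, 1, 1; 0, 0, 1]

/-- `M3 = [[1,0,0],[0,1,0],[0,1,1]]`. -/
def M3 : Matrix (Fin 3) (Fin 3) ℝ := !![1, 0, 0; 0, 1, 0; 0, 1, 1]

/- A tuple `p = (p_n, p_n', q_n, …, p_1, p_1', q_1) ∈ ℕ₀^{3n}` is encoded by three
functions `P P' Q : Fin n → ℕ`, where the index `i : Fin n` corresponds to the
subscript `i + 1` (so `P ⟨0,_⟩ = p_1`, …, `P ⟨n-1,_⟩ = p_n`). -/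

/-- The transition matrix `M_p = M1^{p_n} M3^{p_n'} M2^{q_n} ⋯ M1^{p_1} M3^{p_1'} M2^{q_1}`. -/
def Mp (n : ℕ) (P P' Q : Fin n → ℕ) : Matrix (Fin 3) (Fin 3) ℝ :=
  ((List.finRange n).map fun i => M1 ^ P i.rev * M3 ^ P' i.rev * M2 ^ Q i.rev).prod

/-- Membership of the tuple `p` in `I_n`. -/
def memI (n : ℕ) (P P' Q : Fin n → ℕ) : Prop :=
  (∀ i, 0 < Q i) ∧ (∀ i, 0 < P i + P' i) ∧ (∃ j, 0 < P j) ∧ (∃ k, 0 < P' k)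

/-- Finite continued fraction: `cf [a₁, …, a_m] x = 1/(a₁ + 1/(a₂ + ⋯ + 1/(a_m + x)))`. -/
def cf (l : List ℕ) (x : ℝ) : ℝ := l.foldr (fun a y => 1 / (a + y)) x

/-- The (0-indexed) block index `k(j+1) - 1 = n - 1 - (j mod n)` used at step `j + 1`. -/
def blk (n : ℕ) (hn : 0 < n) (j : ℕ) : Fin n :=
  ⟨n - 1 - j % n, lt_of_le_of_lt (Nat.sub_le _ _) (Nat.sub_lt hn one_pos)⟩

/-- The sequence `(a₁, …, a_{2n}) = (p_n + p_n', q_n, …, p_1 + p_1', q_1)` as a list. -/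
def aList (n : ℕ) (hn : 0 < n) (P P' Q : Fin n → ℕ) : List ℕ :=
  (List.range n).flatMap fun i => [P (blk n hn i) + P' (blk n hn i), Q (blk n hn i)]

/-- `isH0 n hn P P' Q h0` says that `h0` is the number `h_{p,0}`: a real number in `(0,1)`
that is a fixed point of `x ↦ 1/(a₁ + 1/(a₂ + ⋯ + 1/(a_{2n} + x)))` (there is exactly one). -/
def isH0 (n : ℕ) (hn : 0 < n) (P P' Q : Fin n → ℕ) (h0 : ℝ) : Prop :=
  h0 ∈ Set.Ioo (0 : ℝ) 1 ∧ cf (aList n hn P P' Q) h0 = h0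

/-- The pair `(w_{p,j}, h_{p,j})`, with `w_{p,0} = 1`, `h_{p,0} = h0`, and for `j ≥ 1`:
`w_{p,j} = w_{p,j-1} − (p_{k(j)} + p'_{k(j)}) h_{p,j-1}`, `h_{p,j} = h_{p,j-1} − q_{k(j)} w_{p,j}`. -/
def wh (n : ℕ) (hn : 0 < n) (P P' Q : Fin n → ℕ) (h0 : ℝ) : ℕ → ℝ × ℝ
  | 0 => (1, h0)
  | j + 1 =>
    let prev := wh n hn P P' Q h0 j
    let b := blk n hn j
    let w := prev.1 - ((P b : ℝ) + (P' b : ℝ)) * prev.2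
    (w, prev.2 - (Q b : ℝ) * w)

/-- The width `w_{p,j}`. -/
def wseq (n : ℕ) (hn : 0 < n) (P P' Q : Fin n → ℕ) (h0 : ℝ) (j : ℕ) : ℝ :=
  (wh n hn P P' Q h0 j).1

/-- The height `h_{p,j}`. -/
def hseq (n : ℕ) (hn : 0 < n) (P P' Q : Fin n → ℕ) (h0 : ℝ) (j : ℕ) : ℝ :=
  (wh n hn P P' Q h0 j).2

/-- The split ratio `s_p = Σ_{i=0}^∞ p_{k(i+1)} h_{p,i}`. -/
def splitRatio (n : ℕ) (hn : 0 < n) (P P' Q : Fin n → ℕ) (h0 : ℝ) : ℝ :=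
  ∑' i : ℕ, (P (blk n hn i) : ℝ) * hseq n hn P P' Q h0 i

/-- The reindexing realizing the shift `T`: the tuple `T(p)` is given by the functions
`P ∘ shiftIdx n hn`, `P' ∘ shiftIdx n hn`, `Q ∘ shiftIdx n hn`. -/
def shiftIdx (n : ℕ) (hn : 0 < n) (i : Fin n) : Fin n :=
  ⟨(i.val + (n - 1)) % n, Nat.mod_lt _ hn⟩

/-! ### Auxiliary lemmas about `cf` -/

lemma cf_nil (x : ℝ) : cf [] x = x := rfl

lemma cf_cons (a : ℕ) (l : List ℕ) (x : ℝ) : cf (a :: l) x = 1 / (a + cf l x) := rfl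

lemma cf_nonneg {l : List ℕ} (hl : ∀ a ∈ l, 1 ≤ a) {x : ℝ} (hx : 0 ≤ x) : 0 ≤ cf l x := by
  induction l with
  | nil => exact hx
  | cons a l ih =>
    have ha : (1:ℝ) ≤ a := by exact_mod_cast hl a List.mem_cons_self
    have h2 := ih (fun b hb => hl b (List.mem_cons_of_mem _ hb))
    rw [cf_cons]
    positivity

lemma cf_pos {l : List ℕ} (hl : ∀ a ∈ l, 1 ≤ a) {x : ℝ} (hx : 0 < x) : 0 < cf l x := by
  induction l with
  | nil => exact hx
  | cons a l ih =>
    have ha : (1:ℝ) ≤ a := by exact_mod_cast hl a List.mem_cons_self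
    have h2 := ih (fun b hb => hl b (List.mem_cons_of_mem _ hb))
    rw [cf_cons]
    exact one_div_pos.2 (by linarith)

lemma cf_lt_one {l : List ℕ} (hne : l ≠ []) (hl : ∀ a ∈ l, 1 ≤ a) {x : ℝ} (hx : 0 < x) :
    cf l x < 1 := by
  cases l with
  | nil => exact absurd rfl hne
  | cons a l =>
    have ha : (1:ℝ) ≤ a := by exact_mod_cast hl a List.mem_cons_self
    have h2 : 0 < cf l x := cf_pos (fun b hb => hl b (List.mem_cons_of_mem _ hb)) hx
    rw [cf_cons, div_lt_one (by linarith)]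
    linarith

lemma cf_mem_Ioo {l : List ℕ} (hne : l ≠ []) (hl : ∀ a ∈ l, 1 ≤ a) {x : ℝ}
    (hx : x ∈ Set.Ioo (0:ℝ) 1) : cf l x ∈ Set.Ioo (0:ℝ) 1 :=
  ⟨cf_pos hl hx.1, cf_lt_one hne hl hx.1⟩

lemma cf_dist {l : List ℕ} (hl : ∀ a ∈ l, 1 ≤ a) {x y : ℝ} (hx : 0 ≤ x) (hy : 0 ≤ y) :
    |cf l x - cf l y| ≤ |x - y| := by
  induction l with
  | nil => exact le_rfl
  | cons a l ih =>
    have ha : (1:ℝ) ≤ a := by exact_mod_cast hl a List.mem_cons_self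
    have hl' : ∀ b ∈ l, 1 ≤ b := fun b hb => hl b (List.mem_cons_of_mem _ hb)
    have hu : 0 ≤ cf l x := cf_nonneg hl' hx
    have hv : 0 ≤ cf l y := cf_nonneg hl' hy
    set u := cf l x
    set v := cf l y
    have hau : (0:ℝ) < a + u := by linarith
    have hav : (0:ℝ) < a + v := by linarith
    have key : 1 / (↑a + u) - 1 / (↑a + v) = (v - u) / ((↑a + u) * (↑a + v)) := by
      field_simp
      ring
    rw [cf_cons, cf_cons, key, abs_div, abs_of_pos (mul_pos hau hav)]
    have h1 : (1:ℝ) ≤ (↑a + u) * (↑a + v) := by nlinarith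
    calc |v - u| / ((↑a + u) * (↑a + v)) ≤ |v - u| := div_le_self (abs_nonneg _) h1
      _ = |u - v| := abs_sub_comm v u
      _ ≤ |x - y| := ih hl'

lemma cf_fixed_unique {l : List ℕ} (hne : l ≠ []) (hl : ∀ a ∈ l, 1 ≤ a)
    {x y : ℝ} (hx : x ∈ Set.Ioo (0:ℝ) 1) (hy : y ∈ Set.Ioo (0:ℝ) 1)
    (hfx : cf l x = x) (hfy : cf l y = y) : x = y := by
  by_contra hxy
  obtain ⟨L, b, rfl⟩ : ∃ L b, l = L ++ [b] :=
    ⟨l.dropLast, l.getLast hne, (l.dropLast_append_getLast hne).symm⟩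
  have hb : (1:ℝ) ≤ b := by exact_mod_cast hl b (by simp)
  have hL : ∀ a ∈ L, 1 ≤ a := fun a ha => hl a (by simp [ha])
  have happ : ∀ z : ℝ, cf (L ++ [b]) z = cf L (1 / (↑b + z)) := by
    intro z; simp [cf, List.foldr_append]
  have hbx : (0:ℝ) < ↑b + x := by linarith [hx.1]
  have hby : (0:ℝ) < ↑b + y := by linarith [hy.1]
  have key : 1 / (↑b + x) - 1 / (↑b + y) = (y - x) / ((↑b + x) * (↑b + y)) := by
    field_simp
    ring
  have hD : (1:ℝ) < (↑b + x) * (↑b + y) := by nlinarith [hx.1, hy.1]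
  have hstep : |1 / (↑b + x) - 1 / (↑b + y)| < |x - y| := by
    rw [key, abs_div, abs_of_pos (by positivity : (0:ℝ) < (↑b + x) * (↑b + y)),
      abs_sub_comm y x]
    have habs : 0 < |x - y| := abs_pos.2 (sub_ne_zero.2 hxy)
    exact div_lt_self habs hD
  have hmain : |x - y| < |x - y| := by
    calc |x - y| = |cf (L ++ [b]) x - cf (L ++ [b]) y| := by rw [hfx, hfy]
      _ = |cf L (1 / (↑b + x)) - cf L (1 / (↑b + y))| := by rw [happ, happ]
      _ ≤ |1 / (↑b + x) - 1 / (↑b + y)| := cf_dist hL (by positivity) (by positivity)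
      _ < |x - y| := hstep
  exact absurd hmain (lt_irrefl _)


/-! ### Structure of the coefficient list -/

lemma drop_flatMap_pair (u v : ℕ → ℕ) (m : ℕ) :
    ∀ i ≤ m, List.drop (2*i) ((List.range m).flatMap fun j => [u j, v j])
      = (List.range (m - i)).flatMap fun j => [u (i+j), v (i+j)] := by
  intro i
  induction i with
  | zero => intro _; simp
  | succ i ih =>
    intro him
    have h1 : i ≤ m := by omega
    have h2 : m - i = (m - (i+1)) + 1 := by omega
    rw [show 2*(i+1) = 2*i + 2 from by ring, ← List.drop_drop, ih h1, h2,
      List.range_succ_eq_map]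
    simp only [List.flatMap_cons, List.flatMap_map]
    rw [List.drop_left' (by simp : ([u (i+0), v (i+0)] : List ℕ).length = 2)]
    congr 1
    funext j
    simp [Nat.add_assoc, Nat.add_comm 1 j]



lemma length_flatMap_pair (u v : ℕ → ℕ) (m : ℕ) :
    ((List.range m).flatMap fun j => [u j, v j]).length = 2 * m := by
  induction m with
  | zero => simp
  | succ k ih => rw [List.range_succ]; simp [ih]; omega

lemma aList_length (n : ℕ) (hn : 0 < n) (P P' Q : Fin n → ℕ) :
    (aList n hn P P' Q).length = 2 * n :=
  length_flatMap_pair _ _ n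

lemma aList_mem (n : ℕ) (hn : 0 < n) (P P' Q : Fin n → ℕ)
    (hA : ∀ i, 0 < P i + P' i) (hQ : ∀ i, 0 < Q i) :
    ∀ a ∈ aList n hn P P' Q, 1 ≤ a := by
  intro a ha
  simp only [aList, List.mem_flatMap, List.mem_range] at ha
  obtain ⟨i, _, hi⟩ := ha
  simp only [List.mem_cons, List.mem_singleton] at hi
  rcases hi with rfl | rfl | h
  · exact hA _
  · exact hQ _
  · exact absurd h List.not_mem_nil

lemma aList_drop_two (n : ℕ) (hn : 0 < n) (P P' Q : Fin n → ℕ) {i : ℕ} (hi : i < n) :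
    List.drop (2*i) (aList n hn P P' Q)
      = (P (blk n hn i) + P' (blk n hn i)) :: Q (blk n hn i)
        :: List.drop (2*(i+1)) (aList n hn P P' Q) := by
  rw [show aList n hn P P' Q = (List.range n).flatMap
      fun j => [P (blk n hn j) + P' (blk n hn j), Q (blk n hn j)] from rfl,
    drop_flatMap_pair _ _ n i hi.le, drop_flatMap_pair _ _ n (i+1) hi,
    show n - i = (n - (i+1)) + 1 from by omega, List.range_succ_eq_map]
  simp only [List.flatMap_cons, List.flatMap_map]
  simp only [Nat.add_zero, List.cons_append, List.nil_append]
  congr 1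
  congr 1
  congr 1
  funext j
  simp [Nat.add_assoc, Nat.add_comm 1 j]

/-! ### The tail sequence -/

def tl (n : ℕ) (hn : 0 < n) (P P' Q : Fin n → ℕ) (h0 : ℝ) (k : ℕ) : ℝ :=
  cf (List.drop (k % (2*n)) (aList n hn P P' Q)) h0

section Tails

variable (n : ℕ) (hn : 0 < n) (P P' Q : Fin n → ℕ) (h0 : ℝ)

lemma tl_mem (hA : ∀ i, 0 < P i + P' i) (hQ : ∀ i, 0 < Q i) (hh0 : isH0 n hn P P' Q h0)
    (k : ℕ) : tl n hn P P' Q h0 k ∈ Set.Ioo (0:ℝ) 1 := by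
  have hlt : k % (2*n) < 2*n := Nat.mod_lt _ (by omega)
  have hlen : 0 < (List.drop (k % (2*n)) (aList n hn P P' Q)).length := by
    rw [List.length_drop, aList_length]; omega
  exact cf_mem_Ioo (List.ne_nil_of_length_pos hlen)
    (fun a ha => aList_mem n hn P P' Q hA hQ a (List.mem_of_mem_drop ha)) hh0.1

lemma blk_mod (j : ℕ) : blk n hn j = blk n hn (j % n) := by
  apply Fin.ext
  simp only [blk]
  rw [Nat.mod_mod_of_dvd _ dvd_rfl]

lemma tl_shift (j k : ℕ) : tl n hn P P' Q h0 (2*n*j + k) = tl n hn P P' Q h0 k := by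
  unfold tl
  rw [show 2*n*j + k = k + j*(2*n) from by ring, Nat.add_mul_mod_self_right]

lemma tl_rel1 (j : ℕ) :
    tl n hn P P' Q h0 (2*j) =
      1 / ((P (blk n hn j) + P' (blk n hn j) : ℕ) + tl n hn P P' Q h0 (2*j+1)) := by
  have hi : j % n < n := Nat.mod_lt _ hn
  have e0 : (2*j) % (2*n) = 2*(j%n) := Nat.mul_mod_mul_left 2 j n
  have e1 : (2*j+1) % (2*n) = 2*(j%n)+1 := by
    rw [← Nat.mod_add_mod, e0, Nat.mod_eq_of_lt (by omega)]
  have hdrop1 : List.drop (2*(j%n)+1) (aList n hn P P' Q)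
      = Q (blk n hn (j%n)) :: List.drop (2*(j%n+1)) (aList n hn P P' Q) := by
    rw [show (2*(j%n)+1) = 2*(j%n) + 1 from rfl, ← List.drop_drop,
      aList_drop_two n hn P P' Q hi]
    rfl
  unfold tl
  rw [e0, e1, aList_drop_two n hn P P' Q hi, hdrop1, cf_cons, blk_mod n hn j]

lemma tl_rel2 (hh0 : isH0 n hn P P' Q h0) (j : ℕ) :
    tl n hn P P' Q h0 (2*j+1) =
      1 / ((Q (blk n hn j) : ℝ) + tl n hn P P' Q h0 (2*j+2)) := by
  have hi : j % n < n := Nat.mod_lt _ hn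
  have e1 : (2*j+1) % (2*n) = 2*(j%n)+1 := by
    rw [← Nat.mod_add_mod, Nat.mul_mod_mul_left, Nat.mod_eq_of_lt (by omega)]
  have hdrop1 : List.drop (2*(j%n)+1) (aList n hn P P' Q)
      = Q (blk n hn (j%n)) :: List.drop (2*(j%n+1)) (aList n hn P P' Q) := by
    rw [show (2*(j%n)+1) = 2*(j%n) + 1 from rfl, ← List.drop_drop,
      aList_drop_two n hn P P' Q hi]
    rfl
  have e2 : (2*j+2) % (2*n) = 2*((j%n+1) % n) := by
    rw [show 2*j+2 = 2*(j+1) from by ring, Nat.mul_mod_mul_left]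
    congr 1
    rw [← Nat.mod_add_mod]
  have htail : cf (List.drop (2*(j%n+1)) (aList n hn P P' Q)) h0
      = cf (List.drop ((2*j+2) % (2*n)) (aList n hn P P' Q)) h0 := by
    rw [e2]
    rcases lt_or_eq_of_le (Nat.succ_le_of_lt hi) with h | h
    · rw [Nat.mod_eq_of_lt h]
    · have h' : j % n + 1 = n := h
      rw [h', Nat.mod_self, Nat.mul_zero, List.drop_zero,
        ← aList_length n hn P P' Q, List.drop_length, cf_nil, hh0.2]
  unfold tl
  rw [e1, hdrop1, cf_cons, blk_mod n hn j, htail]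

end Tails

/-- Products of tails: `Wp j = ∏_{k<2j} tl k`, which equals `w_{p,j}`. -/
def Wp (n : ℕ) (hn : 0 < n) (P P' Q : Fin n → ℕ) (h0 : ℝ) (j : ℕ) : ℝ :=
  ∏ k ∈ Finset.range (2*j), tl n hn P P' Q h0 k

section Tails2

variable (n : ℕ) (hn : 0 < n) (P P' Q : Fin n → ℕ) (h0 : ℝ)

lemma Wp_succ (j : ℕ) : Wp n hn P P' Q h0 (j+1)
    = Wp n hn P P' Q h0 j * tl n hn P P' Q h0 (2*j) * tl n hn P P' Q h0 (2*j+1) := by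
  unfold Wp
  rw [show 2*(j+1) = (2*j)+1+1 from by ring, Finset.prod_range_succ, Finset.prod_range_succ]

lemma Wp_pos (hA : ∀ i, 0 < P i + P' i) (hQ : ∀ i, 0 < Q i) (hh0 : isH0 n hn P P' Q h0)
    (j : ℕ) : 0 < Wp n hn P P' Q h0 j :=
  Finset.prod_pos fun k _ => (tl_mem n hn P P' Q h0 hA hQ hh0 k).1

lemma whEq (hA : ∀ i, 0 < P i + P' i) (hQ : ∀ i, 0 < Q i) (hh0 : isH0 n hn P P' Q h0)
    (j : ℕ) : wh n hn P P' Q h0 j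
      = (Wp n hn P P' Q h0 j, Wp n hn P P' Q h0 j * tl n hn P P' Q h0 (2*j)) := by
  induction j with
  | zero =>
    have ht0 : tl n hn P P' Q h0 0 = h0 := by
      unfold tl
      rw [Nat.zero_mod, List.drop_zero, hh0.2]
    simp [wh, Wp, ht0]
  | succ j ih =>
    have r1 := tl_rel1 n hn P P' Q h0 j
    have r2 := tl_rel2 n hn P P' Q h0 hh0 j
    have m0 := tl_mem n hn P P' Q h0 hA hQ hh0 (2*j)
    have m1 := tl_mem n hn P P' Q h0 hA hQ hh0 (2*j+1)
    have m2 := tl_mem n hn P P' Q h0 hA hQ hh0 (2*j+2)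
    set t0 := tl n hn P P' Q h0 (2*j) with h_t0
    set t1 := tl n hn P P' Q h0 (2*j+1) with h_t1
    set t2 := tl n hn P P' Q h0 (2*j+2) with h_t2
    set W := Wp n hn P P' Q h0 j with h_W
    have hd1 : (0:ℝ) < ((P (blk n hn j) + P' (blk n hn j) : ℕ):ℝ) + t1 := by
      have : (0:ℝ) ≤ ((P (blk n hn j) + P' (blk n hn j) : ℕ):ℝ) := Nat.cast_nonneg _
      nlinarith [m1.1]
    have hd2 : (0:ℝ) < ((Q (blk n hn j) : ℕ):ℝ) + t2 := by
      have : (0:ℝ) ≤ ((Q (blk n hn j) : ℕ):ℝ) := Nat.cast_nonneg _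
      nlinarith [m2.1]
    have e1 : t0 * (((P (blk n hn j) + P' (blk n hn j) : ℕ):ℝ) + t1) = 1 := by
      rw [r1]
      exact one_div_mul_cancel hd1.ne'
    have e2 : t1 * (((Q (blk n hn j) : ℕ):ℝ) + t2) = 1 := by
      rw [r2]
      exact one_div_mul_cancel hd2.ne'
    push_cast at e1 e2
    have hW1 : Wp n hn P P' Q h0 (j+1) = W * t0 * t1 := Wp_succ n hn P P' Q h0 j
    have ht2' : tl n hn P P' Q h0 (2*(j+1)) = t2 := by rw [show 2*(j+1) = 2*j+2 from by ring]
    rw [wh, ih, hW1, ht2']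
    simp only [Prod.mk.injEq]
    constructor
    · show W - ((P (blk n hn j) : ℝ) + (P' (blk n hn j) : ℝ)) * (W * t0) = W * t0 * t1
      linear_combination (-W) * e1
    · show W * t0 - (Q (blk n hn j) : ℝ) *
          (W - ((P (blk n hn j) : ℝ) + (P' (blk n hn j) : ℝ)) * (W * t0)) = W * t0 * t1 * t2
      have hw : W - ((P (blk n hn j) : ℝ) + (P' (blk n hn j) : ℝ)) * (W * t0) = W * t0 * t1 := by
        linear_combination (-W) * e1
      rw [hw]
      linear_combination (-(W * t0)) * e2

variable (hA : ∀ i, 0 < P i + P' i) (hQ : ∀ i, 0 < Q i) (hh0 : isH0 n hn P P' Q h0)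

include hA hQ hh0

lemma wseq_eq (j : ℕ) : wseq n hn P P' Q h0 j = Wp n hn P P' Q h0 j := by
  unfold wseq
  rw [whEq n hn P P' Q h0 hA hQ hh0 j]

lemma hseq_eq (j : ℕ) :
    hseq n hn P P' Q h0 j = Wp n hn P P' Q h0 j * tl n hn P P' Q h0 (2*j) := by
  unfold hseq
  rw [whEq n hn P P' Q h0 hA hQ hh0 j]

lemma hseq_pos (j : ℕ) : 0 < hseq n hn P P' Q h0 j := by
  rw [hseq_eq n hn P P' Q h0 hA hQ hh0 j]
  exact mul_pos (Wp_pos n hn P P' Q h0 hA hQ hh0 j) (tl_mem n hn P P' Q h0 hA hQ hh0 _).1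

lemma wseq_pos (j : ℕ) : 0 < wseq n hn P P' Q h0 j := by
  rw [wseq_eq n hn P P' Q h0 hA hQ hh0 j]
  exact Wp_pos n hn P P' Q h0 hA hQ hh0 j

lemma wseq_succ_lt_hseq (j : ℕ) :
    wseq n hn P P' Q h0 (j+1) < hseq n hn P P' Q h0 j := by
  rw [wseq_eq n hn P P' Q h0 hA hQ hh0 (j+1), hseq_eq n hn P P' Q h0 hA hQ hh0 j,
    Wp_succ]
  have hW := Wp_pos n hn P P' Q h0 hA hQ hh0 j
  have m0 := tl_mem n hn P P' Q h0 hA hQ hh0 (2*j)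
  have m1 := tl_mem n hn P P' Q h0 hA hQ hh0 (2*j+1)
  nlinarith [mul_pos hW m0.1, m1.1, m1.2]

lemma Wp_antitone : Antitone (Wp n hn P P' Q h0) := by
  apply antitone_nat_of_succ_le
  intro j
  rw [Wp_succ]
  have hW := Wp_pos n hn P P' Q h0 hA hQ hh0 j
  have m0 := tl_mem n hn P P' Q h0 hA hQ hh0 (2*j)
  have m1 := tl_mem n hn P P' Q h0 hA hQ hh0 (2*j+1)
  calc Wp n hn P P' Q h0 j * tl n hn P P' Q h0 (2*j) * tl n hn P P' Q h0 (2*j+1)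
      ≤ Wp n hn P P' Q h0 j * tl n hn P P' Q h0 (2*j) * 1 := by
        have := mul_pos hW m0.1
        nlinarith [m1.2]
    _ ≤ Wp n hn P P' Q h0 j := by nlinarith [m0.2, hW, m0.1]

omit hA hQ hh0 in
lemma Wp_pow (j : ℕ) : Wp n hn P P' Q h0 (n*j) = (Wp n hn P P' Q h0 n)^j := by
  induction j with
  | zero => simp [Wp]
  | succ j ih =>
    have : Wp n hn P P' Q h0 (n*(j+1)) = Wp n hn P P' Q h0 (n*j) * Wp n hn P P' Q h0 n := by
      unfold Wp
      rw [show 2*(n*(j+1)) = 2*(n*j) + 2*n from by ring, Finset.prod_range_add]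
      congr 1
      apply Finset.prod_congr rfl
      intro i _
      rw [show 2*(n*j) + i = 2*n*j + i from by ring, tl_shift]
    rw [this, ih, pow_succ]

lemma Wp_lt_one : Wp n hn P P' Q h0 n < 1 := by
  have h1 : Wp n hn P P' Q h0 1 = tl n hn P P' Q h0 0 * tl n hn P P' Q h0 1 := by
    unfold Wp
    rw [show 2*1 = 1+1 from rfl, Finset.prod_range_succ, Finset.prod_range_succ,
      Finset.prod_range_zero, one_mul]
  have m0 := tl_mem n hn P P' Q h0 hA hQ hh0 0
  have m1 := tl_mem n hn P P' Q h0 hA hQ hh0 1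
  calc Wp n hn P P' Q h0 n ≤ Wp n hn P P' Q h0 1 :=
        Wp_antitone n hn P P' Q h0 hA hQ hh0 hn
    _ < 1 := by rw [h1]; nlinarith [m0.1, m0.2, m1.1, m1.2]

lemma wseq_tendsto : Filter.Tendsto (wseq n hn P P' Q h0) Filter.atTop (nhds 0) := by
  have hdiv : Filter.Tendsto (fun N => N / n) Filter.atTop Filter.atTop := by
    apply Filter.tendsto_atTop_atTop.2
    intro b
    exact ⟨b*n, fun m hm => (Nat.le_div_iff_mul_le hn).2 hm⟩
  have hpow : Filter.Tendsto (fun N : ℕ => (Wp n hn P P' Q h0 n)^(N/n))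
      Filter.atTop (nhds 0) :=
    (tendsto_pow_atTop_nhds_zero_of_lt_one
      (Wp_pos n hn P P' Q h0 hA hQ hh0 n).le
      (Wp_lt_one n hn P P' Q h0 hA hQ hh0)).comp hdiv
  apply squeeze_zero (fun N => (wseq_pos n hn P P' Q h0 hA hQ hh0 N).le) _ hpow
  intro N
  rw [wseq_eq n hn P P' Q h0 hA hQ hh0 N, ← Wp_pow n hn P P' Q h0 (N/n)]
  exact Wp_antitone n hn P P' Q h0 hA hQ hh0
    (by rw [Nat.mul_comm]; exact Nat.div_mul_le_self N n)

omit hA hQ hh0 in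
lemma wseq_succ (j : ℕ) : wseq n hn P P' Q h0 (j+1)
    = wseq n hn P P' Q h0 j
      - ((P (blk n hn j) + P' (blk n hn j) : ℕ):ℝ) * hseq n hn P P' Q h0 j := by
  simp only [wseq, hseq, wh]
  push_cast
  ring

lemma sum_Ico_tele (M N : ℕ) (h : M ≤ N) :
    ∑ j ∈ Finset.Ico M N, ((P (blk n hn j) + P' (blk n hn j) : ℕ):ℝ)
        * hseq n hn P P' Q h0 j
      = wseq n hn P P' Q h0 M - wseq n hn P P' Q h0 N := by
  induction N with
  | zero =>
    have : M = 0 := Nat.le_zero.1 h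
    subst this
    simp
  | succ N ih =>
    rcases Nat.lt_or_ge M (N+1) with hlt | hge
    · have hMN : M ≤ N := by omega
      rw [Finset.sum_Ico_succ_top hMN, ih hMN, wseq_succ n hn P P' Q h0]
      ring
    · have : M = N+1 := by omega
      subst this
      simp

omit hA hQ hh0 in
lemma wseq_zero : wseq n hn P P' Q h0 0 = 1 := rfl

end Tails2

/-! ### Summation -/

section Sums

variable (n : ℕ) (hn : 0 < n) (P P' Q : Fin n → ℕ) (h0 : ℝ)
variable (hA : ∀ i, 0 < P i + P' i) (hQ : ∀ i, 0 < Q i) (hh0 : isH0 n hn P P' Q h0)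

include hA hQ hh0

lemma partial_total (N : ℕ) :
    ∑ j ∈ Finset.range N, ((P (blk n hn j) + P' (blk n hn j) : ℕ):ℝ)
        * hseq n hn P P' Q h0 j = 1 - wseq n hn P P' Q h0 N := by
  rw [Finset.range_eq_Ico, sum_Ico_tele n hn P P' Q h0 hA hQ hh0 0 N (Nat.zero_le N),
    wseq_zero]

lemma total_hasSum :
    HasSum (fun j => ((P (blk n hn j) + P' (blk n hn j) : ℕ):ℝ)
      * hseq n hn P P' Q h0 j) 1 := by
  set f := fun j => ((P (blk n hn j) + P' (blk n hn j) : ℕ):ℝ) * hseq n hn P P' Q h0 j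
    with hf
  have hnonneg : ∀ j, 0 ≤ f j := fun j =>
    mul_nonneg (Nat.cast_nonneg _) (hseq_pos n hn P P' Q h0 hA hQ hh0 j).le
  have hpartial : ∀ N, ∑ j ∈ Finset.range N, f j = 1 - wseq n hn P P' Q h0 N :=
    partial_total n hn P P' Q h0 hA hQ hh0
  have hsummable : Summable f := by
    apply summable_of_sum_range_le (c := 1) hnonneg
    intro N
    rw [hpartial N]
    have := wseq_pos n hn P P' Q h0 hA hQ hh0 N
    linarith
  have ht : Filter.Tendsto (fun N => ∑ j ∈ Finset.range N, f j)
      Filter.atTop (nhds 1) := by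
    have h2 := (tendsto_const_nhds (x := (1:ℝ)) (f := Filter.atTop (α := ℕ))).sub
      (wseq_tendsto n hn P P' Q h0 hA hQ hh0)
    rw [sub_zero] at h2
    exact h2.congr (fun N => (hpartial N).symm)
  have h1 : ∑' j, f j = 1 :=
    tendsto_nhds_unique hsummable.hasSum.tendsto_sum_nat ht
  rw [← h1]
  exact hsummable.hasSum

lemma summable_B (B : Fin n → ℕ) (hB : ∀ i, B i ≤ P i + P' i) :
    Summable (fun j => ((B (blk n hn j)):ℝ) * hseq n hn P P' Q h0 j) := by
  apply Summable.of_nonneg_of_le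
    (fun j => mul_nonneg (Nat.cast_nonneg _) (hseq_pos n hn P P' Q h0 hA hQ hh0 j).le)
    (fun j => ?_) (total_hasSum n hn P P' Q h0 hA hQ hh0).summable
  have hle : ((B (blk n hn j)):ℝ) ≤ ((P (blk n hn j) + P' (blk n hn j) : ℕ):ℝ) := by
    exact_mod_cast hB _
  exact mul_le_mul_of_nonneg_right hle (hseq_pos n hn P P' Q h0 hA hQ hh0 j).le

lemma tsum_lt (B C : Fin n → ℕ) (hBle : ∀ i, B i ≤ P i + P' i)
    (hCle : ∀ i, C i ≤ P i + P' i) (m : ℕ)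
    (heqlt : ∀ j < m, B (blk n hn j) = C (blk n hn j))
    (hm : C (blk n hn m) < B (blk n hn m)) :
    (∑' j, ((C (blk n hn j)):ℝ) * hseq n hn P P' Q h0 j)
      < ∑' j, ((B (blk n hn j)):ℝ) * hseq n hn P P' Q h0 j := by
  set fB := fun j => ((B (blk n hn j)):ℝ) * hseq n hn P P' Q h0 j with hfB
  set fC := fun j => ((C (blk n hn j)):ℝ) * hseq n hn P P' Q h0 j with hfC
  have hBsum : Summable fB := summable_B n hn P P' Q h0 hA hQ hh0 B hBle
  have hCsum : Summable fC := summable_B n hn P P' Q h0 hA hQ hh0 C hCle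
  have hdelta : 0 < hseq n hn P P' Q h0 m - wseq n hn P P' Q h0 (m+1) := by
    have := wseq_succ_lt_hseq n hn P P' Q h0 hA hQ hh0 m
    linarith
  have claim : ∀ N, m+1 ≤ N →
      hseq n hn P P' Q h0 m - wseq n hn P P' Q h0 (m+1)
        ≤ ∑ j ∈ Finset.range N, fB j - ∑ j ∈ Finset.range N, fC j := by
    intro N hN
    rw [← Finset.sum_sub_distrib]
    have hsplit : ∑ j ∈ Finset.range N, (fB j - fC j)
        = ∑ j ∈ Finset.range (m+1), (fB j - fC j)
          + ∑ j ∈ Finset.Ico (m+1) N, (fB j - fC j) :=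
      (Finset.sum_range_add_sum_Ico _ hN).symm
    have hhead : ∑ j ∈ Finset.range (m+1), (fB j - fC j) = fB m - fC m := by
      rw [Finset.sum_range_succ]
      have : ∑ j ∈ Finset.range m, (fB j - fC j) = 0 := by
        apply Finset.sum_eq_zero
        intro j hj
        rw [hfB, hfC]
        simp only
        rw [heqlt j (Finset.mem_range.1 hj)]
        ring
      rw [this, zero_add]
    have hfBm : hseq n hn P P' Q h0 m ≤ fB m - fC m := by
      rw [hfB, hfC]
      simp only
      have h1 : ((C (blk n hn m)):ℝ) + 1 ≤ ((B (blk n hn m)):ℝ) := by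
        exact_mod_cast hm
      have h2 := hseq_pos n hn P P' Q h0 hA hQ hh0 m
      nlinarith
    have htail : -(wseq n hn P P' Q h0 (m+1) - wseq n hn P P' Q h0 N)
        ≤ ∑ j ∈ Finset.Ico (m+1) N, (fB j - fC j) := by
      rw [← sum_Ico_tele n hn P P' Q h0 hA hQ hh0 (m+1) N hN, ← Finset.sum_neg_distrib]
      apply Finset.sum_le_sum
      intro j hj
      have h2 := (hseq_pos n hn P P' Q h0 hA hQ hh0 j).le
      have hBnn : (0:ℝ) ≤ fB j := mul_nonneg (Nat.cast_nonneg _) h2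
      have hCle' : fC j ≤ ((P (blk n hn j) + P' (blk n hn j) : ℕ):ℝ)
          * hseq n hn P P' Q h0 j := by
        rw [hfC]
        simp only
        exact mul_le_mul_of_nonneg_right (by exact_mod_cast hCle _) h2
      linarith
    have hwN := wseq_pos n hn P P' Q h0 hA hQ hh0 N
    rw [hsplit, hhead]
    linarith
  have htend : Filter.Tendsto
      (fun N => ∑ j ∈ Finset.range N, fB j - ∑ j ∈ Finset.range N, fC j)
      Filter.atTop (nhds (∑' j, fB j - ∑' j, fC j)) :=
    hBsum.hasSum.tendsto_sum_nat.sub hCsum.hasSum.tendsto_sum_nat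
  have hge : hseq n hn P P' Q h0 m - wseq n hn P P' Q h0 (m+1)
      ≤ ∑' j, fB j - ∑' j, fC j :=
    ge_of_tendsto htend (Filter.eventually_atTop.2 ⟨m+1, claim⟩)
  linarith

end Sums

/-! ### Final assembly -/

lemma blk_surj {n : ℕ} (hn : 0 < n) {B C : Fin n → ℕ} (hne : B ≠ C) :
    ∃ j, B (blk n hn j) ≠ C (blk n hn j) := by
  obtain ⟨i, hi⟩ := Function.ne_iff.1 hne
  refine ⟨n - 1 - i.val, ?_⟩
  have hlt := i.isLt
  have heq : blk n hn (n - 1 - i.val) = i := by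
    apply Fin.ext
    simp only [blk]
    rw [Nat.mod_eq_of_lt (by omega)]
    omega
  rw [heq]
  exact hi

/-- The generalized split sum. -/
def Sfun (n : ℕ) (hn : 0 < n) (P P' Q : Fin n → ℕ) (h0 : ℝ) (B : Fin n → ℕ) : ℝ :=
  ∑' j, ((B (blk n hn j)):ℝ) * hseq n hn P P' Q h0 j

section Final

variable (n : ℕ) (hn : 0 < n) (P P' Q : Fin n → ℕ) (h0 : ℝ)
variable (hA : ∀ i, 0 < P i + P' i) (hQ : ∀ i, 0 < Q i) (hh0 : isH0 n hn P P' Q h0)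

include hA hQ hh0

lemma S_inj (B C : Fin n → ℕ) (hBle : ∀ i, B i ≤ P i + P' i)
    (hCle : ∀ i, C i ≤ P i + P' i) (h : Sfun n hn P P' Q h0 B = Sfun n hn P P' Q h0 C) :
    B = C := by
  by_contra hne
  have hex : ∃ j, B (blk n hn j) ≠ C (blk n hn j) := blk_surj hn hne
  have hspec := Nat.find_spec hex
  have hmin : ∀ j < Nat.find hex, B (blk n hn j) = C (blk n hn j) :=
    fun j hj => not_not.1 (Nat.find_min hex hj)
  rcases lt_or_gt_of_ne hspec with hlt | hgt
  · have := tsum_lt n hn P P' Q h0 hA hQ hh0 C B hCle hBle (Nat.find hex)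
      (fun j hj => (hmin j hj).symm) hlt
    exact absurd h (ne_of_lt this)
  · have := tsum_lt n hn P P' Q h0 hA hQ hh0 B C hBle hCle (Nat.find hex) hmin hgt
    exact absurd h.symm (ne_of_lt this)

lemma S_total : Sfun n hn P P' Q h0 P + Sfun n hn P P' Q h0 P' = 1 := by
  have htot := total_hasSum n hn P P' Q h0 hA hQ hh0
  have hSP : Summable (fun j => ((P (blk n hn j)):ℝ) * hseq n hn P P' Q h0 j) :=
    summable_B n hn P P' Q h0 hA hQ hh0 P (fun i => Nat.le_add_right _ _)
  have hSP' : Summable (fun j => ((P' (blk n hn j)):ℝ) * hseq n hn P P' Q h0 j) :=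
    summable_B n hn P P' Q h0 hA hQ hh0 P' (fun i => Nat.le_add_left _ _)
  unfold Sfun
  rw [← Summable.tsum_add hSP hSP']
  rw [← htot.tsum_eq]
  apply tsum_congr
  intro j
  push_cast
  ring

end Final

lemma wh_congr (n : ℕ) (hn : 0 < n) (P P' Q R R' U : Fin n → ℕ) (h0 : ℝ)
    (hsum : ∀ i, P i + P' i = R i + R' i) (hq : ∀ i, Q i = U i) (j : ℕ) :
    wh n hn R R' U h0 j = wh n hn P P' Q h0 j := by
  induction j with
  | zero => rfl
  | succ j ih =>
    have hc : ((R (blk n hn j)):ℝ) + ((R' (blk n hn j)):ℝ)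
        = ((P (blk n hn j)):ℝ) + ((P' (blk n hn j)):ℝ) := by
      have h := hsum (blk n hn j)
      have : ((P (blk n hn j) + P' (blk n hn j) : ℕ):ℝ) = ((R (blk n hn j) + R' (blk n hn j) : ℕ):ℝ) := by
        exact_mod_cast congrArg (Nat.cast (R := ℝ)) h
      push_cast at this
      linarith
    simp only [wh, ih, hc, hq (blk n hn j)]

lemma aList_congr (n : ℕ) (hn : 0 < n) (P P' Q R R' U : Fin n → ℕ)
    (hsum : ∀ i, P i + P' i = R i + R' i) (hq : ∀ i, Q i = U i) :
    aList n hn P P' Q = aList n hn R R' U := by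
  unfold aList
  congr 1
  funext i
  rw [hsum, hq]

/-- if `p, t ∈ I_n` satisfy `p_i + p_i' = t_i + t_i'` and `q_i = u_i` for
all `i`, then `s_p = s_t ↔ p = t`, and `s_p + s_t = 1 ↔ t = f(p)`. -/
theorem stmt18 (n : ℕ) (hn : 0 < n) (P P' Q R R' U : Fin n → ℕ)
    (hP : memI n P P' Q) (hT : memI n R R' U)
    (hsum : ∀ i, P i + P' i = R i + R' i) (hq : ∀ i, Q i = U i)
    (h0p h0t : ℝ) (hh0p : isH0 n hn P P' Q h0p) (hh0t : isH0 n hn R R' U h0t) :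
    (splitRatio n hn P P' Q h0p = splitRatio n hn R R' U h0t
      ↔ (P = R ∧ P' = R' ∧ Q = U)) ∧
    (splitRatio n hn P P' Q h0p + splitRatio n hn R R' U h0t = 1
      ↔ (R = P' ∧ R' = P ∧ U = Q)) := by
  obtain ⟨hQp, hAp, -, -⟩ := hP
  have hlen : (aList n hn P P' Q).length = 2*n := aList_length n hn P P' Q
  have hne : aList n hn P P' Q ≠ [] := List.ne_nil_of_length_pos (by rw [hlen]; omega)
  have hmem : ∀ a ∈ aList n hn P P' Q, 1 ≤ a := aList_mem n hn P P' Q hAp hQp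
  have hLeq : aList n hn R R' U = aList n hn P P' Q :=
    (aList_congr n hn P P' Q R R' U hsum hq).symm
  have h0eq : h0t = h0p := by
    have hfix := hh0t.2
    rw [hLeq] at hfix
    exact cf_fixed_unique hne hmem hh0t.1 hh0p.1 hfix hh0p.2
  subst h0eq
  have hwh : ∀ j, hseq n hn R R' U h0t j = hseq n hn P P' Q h0t j := fun j => by
    unfold hseq
    rw [wh_congr n hn P P' Q R R' U h0t hsum hq j]
  have hsplitT : splitRatio n hn R R' U h0t = Sfun n hn P P' Q h0t R := by
    unfold splitRatio Sfun
    exact tsum_congr fun j => by rw [hwh j]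
  have hsplitP : splitRatio n hn P P' Q h0t = Sfun n hn P P' Q h0t P := rfl
  have hRle : ∀ i, R i ≤ P i + P' i := fun i => by have := hsum i; omega
  have hR'le : ∀ i, R' i ≤ P i + P' i := fun i => by have := hsum i; omega
  have hPle : ∀ i, P i ≤ P i + P' i := fun i => Nat.le_add_right _ _
  have hP'le : ∀ i, P' i ≤ P i + P' i := fun i => Nat.le_add_left _ _
  have htotal := S_total n hn P P' Q h0t hAp hQp hh0p
  constructor
  · constructor
    · intro hEq
      rw [hsplitP, hsplitT] at hEq
      have hPR : P = R := S_inj n hn P P' Q h0t hAp hQp hh0p P R hPle hRle hEq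
      refine ⟨hPR, ?_, funext hq⟩
      funext i
      have h1 := hsum i
      have h2 := congrFun hPR i
      omega
    · rintro ⟨h1, h2, h3⟩
      rw [hsplitP, hsplitT, h1]
  · constructor
    · intro hEq
      rw [hsplitP, hsplitT] at hEq
      have hSR : Sfun n hn P P' Q h0t R = Sfun n hn P P' Q h0t P' := by linarith
      have hRP' : R = P' := S_inj n hn P P' Q h0t hAp hQp hh0p R P' hRle hP'le hSR
      refine ⟨hRP', ?_, funext fun i => (hq i).symm⟩
      funext i
      have h1 := hsum i
      have h2 := congrFun hRP' i
      omega
    · rintro ⟨h1, h2, h3⟩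
      rw [hsplitP, hsplitT, h1]
      exact htotal
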